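/- Let K be an arbitrary field and let f(X) ∈ K[[X]] satisfy f(0) = 0. Let f(XY) ∈ K[[X,Y]] denote the series obtained by substituting XY for X in f. If g(X,Y) ∈ K[[X,Y]] satisfies g(X,Y)·(Y − f(XY)) = Y^2, then for every n ≥ 0 the coefficient of X^n Y^n in g equals the coefficient of X^n in f; i.e., the diagonal of Y^2/(Y − f(XY)) equals f. -/

import Mathlib

private lemma fin2_eval (e : Fin 2 →₀ ℕ) :
    e = Finsupp.single 0 (e 0) + Finsupp.single 1 (e 1) := by
  ext a
  fin_cases a <;> simp [Finsupp.single_apply]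

private lemma eval0 (a b : ℕ) :
    ((Finsupp.single 0 a + Finsupp.single 1 b : Fin 2 →₀ ℕ)) 0 = a := by
  simp [Finsupp.single_apply]

private lemma eval1 (a b : ℕ) :
    ((Finsupp.single 0 a + Finsupp.single 1 b : Fin 2 →₀ ℕ)) 1 = b := by
  simp [Finsupp.single_apply]


/-- Substitution `X ↦ XY` in a one-variable power series `f`, producing
`f(XY) ∈ K[[X,Y]]`: the coefficient of `Xᵃ Yᵇ` is `[Xᵃ] f` if `a = b`,
and `0` otherwise. -/
noncomputable def oneVarXY {K : Type*} [Field K] (f : PowerSeries K) :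
    MvPowerSeries (Fin 2) K :=
  fun d => if d 0 = d 1 then PowerSeries.coeff (d 0) f else 0

/-- If `f(0) = 0` and `g · (Y - f(XY)) = Y²` in `K[[X,Y]]`, then the diagonal
of `g = Y²/(Y - f(XY))` equals `f`:  `[Xⁿ Yⁿ] g = [Xⁿ] f` for all `n`. -/
theorem diagonal_geometric {K : Type*} [Field K]
    (f : PowerSeries K) (g : MvPowerSeries (Fin 2) K)
    (hf0 : PowerSeries.constantCoeff f = 0)
    (hg : g * (MvPowerSeries.X 1 - oneVarXY f) = MvPowerSeries.X 1 ^ 2) :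
    ∀ n : ℕ,
      MvPowerSeries.coeff (Finsupp.single 0 n + Finsupp.single 1 n) g =
        PowerSeries.coeff n f := by
  classical
  set h : MvPowerSeries (Fin 2) K :=
    fun d => if d 0 = d 1 + 1 then PowerSeries.coeff (d 0) f else 0 with hhdef
  have hcoeffh : ∀ d : Fin 2 →₀ ℕ, MvPowerSeries.coeff d h =
      if d 0 = d 1 + 1 then PowerSeries.coeff (d 0) f else 0 := fun d => rfl
  -- oneVarXY f = X 1 * h
  have hXh : oneVarXY f = MvPowerSeries.X 1 * h := by
    ext d
    rw [MvPowerSeries.X_def, MvPowerSeries.coeff_monomial_mul]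
    have hLHS : MvPowerSeries.coeff d (oneVarXY f) =
        if d 0 = d 1 then PowerSeries.coeff (d 0) f else 0 := rfl
    rw [hLHS]
    by_cases hle : Finsupp.single (1 : Fin 2) 1 ≤ d
    · have hd1 : 1 ≤ d 1 := Finsupp.single_le_iff.mp hle
      rw [if_pos hle, hcoeffh, one_mul]
      have h0 : (d - Finsupp.single 1 1 : Fin 2 →₀ ℕ) 0 = d 0 := by
        rw [Finsupp.tsub_apply]
        simp [Finsupp.single_apply]
      have h1 : (d - Finsupp.single 1 1 : Fin 2 →₀ ℕ) 1 = d 1 - 1 := by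
        rw [Finsupp.tsub_apply]
        simp [Finsupp.single_apply]
      rw [h0, h1]
      have : (d 0 = d 1 - 1 + 1) ↔ (d 0 = d 1) := by omega
      by_cases hc : d 0 = d 1
      · rw [if_pos hc, if_pos (this.mpr hc)]
      · rw [if_neg hc, if_neg (fun hx => hc (this.mp hx))]
    · have hd1 : d 1 = 0 := by
        rw [Finsupp.single_le_iff] at hle
        omega
      rw [if_neg hle]
      by_cases hc : d 0 = d 1
      · rw [if_pos hc, hc, hd1, PowerSeries.coeff_zero_eq_constantCoeff]
        exact hf0
      · rw [if_neg hc]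
  -- cancel X 1
  have hXne : (MvPowerSeries.X 1 : MvPowerSeries (Fin 2) K) ≠ 0 := by
    intro h0
    have := MvPowerSeries.coeff_index_single_self_X (R := K) (1 : Fin 2)
    rw [h0, map_zero] at this
    exact one_ne_zero this.symm
  have key : g = MvPowerSeries.X 1 + g * h := by
    rw [hXh] at hg
    have hmul : MvPowerSeries.X 1 * (g - g * h) =
        MvPowerSeries.X 1 * MvPowerSeries.X 1 := by
      linear_combination hg
    have := mul_left_cancel₀ hXne hmul
    linear_combination this
  -- vanishing above the superdiagonal
  have vanish : ∀ m : ℕ, ∀ e : Fin 2 →₀ ℕ, e 0 = m → e 0 + 2 ≤ e 1 →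
      MvPowerSeries.coeff e g = 0 := by
    intro m
    induction m using Nat.strong_induction_on with
    | _ m IH =>
      intro e he0 he
      rw [key, map_add, MvPowerSeries.coeff_X, MvPowerSeries.coeff_mul]
      have hne : e ≠ Finsupp.single 1 1 := by
        intro hx
        have : e 1 = 1 := by rw [hx]; simp
        omega
      rw [if_neg hne, zero_add]
      apply Finset.sum_eq_zero
      intro p hp
      rw [Finset.HasAntidiagonal.mem_antidiagonal] at hp
      by_cases hc : p.2 0 = p.2 1 + 1
      · have hp0 : p.1 0 + p.2 0 = e 0 := by
          rw [← hp]; rfl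
        have hp1 : p.1 1 + p.2 1 = e 1 := by
          rw [← hp]; rfl
        have h1 : p.1 0 < m := by omega
        have h2 : p.1 0 + 2 ≤ p.1 1 := by omega
        rw [IH (p.1 0) h1 p.1 rfl h2, zero_mul]
      · rw [hcoeffh, if_neg hc, mul_zero]
  -- the superdiagonal
  have offdiag : ∀ k : ℕ,
      MvPowerSeries.coeff (Finsupp.single 0 k + Finsupp.single 1 (k + 1)) g =
        if k = 0 then 1 else 0 := by
    intro k
    rw [key, map_add, MvPowerSeries.coeff_X, MvPowerSeries.coeff_mul]
    have hsum : ∑ p ∈ Finset.HasAntidiagonal.antidiagonal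
        (Finsupp.single (0 : Fin 2) k + Finsupp.single 1 (k + 1)),
        MvPowerSeries.coeff p.1 g * MvPowerSeries.coeff p.2 h = 0 := by
      apply Finset.sum_eq_zero
      intro p hp
      rw [Finset.HasAntidiagonal.mem_antidiagonal] at hp
      by_cases hc : p.2 0 = p.2 1 + 1
      · have hp0 : p.1 0 + p.2 0 = k := by
          have := congrArg (fun v : Fin 2 →₀ ℕ => v 0) hp
          simpa [eval0] using this
        have hp1 : p.1 1 + p.2 1 = k + 1 := by
          have := congrArg (fun v : Fin 2 →₀ ℕ => v 1) hp
          simpa [eval1] using this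
        have h2 : p.1 0 + 2 ≤ p.1 1 := by omega
        rw [vanish (p.1 0) p.1 rfl h2, zero_mul]
      · rw [hcoeffh, if_neg hc, mul_zero]
    rw [hsum, add_zero]
    by_cases hk : k = 0
    · subst hk
      rw [if_pos rfl, if_pos]
      ext a
      fin_cases a <;> simp [Finsupp.single_apply]
    · rw [if_neg hk, if_neg]
      intro hx
      have := congrArg (fun v : Fin 2 →₀ ℕ => v 0) hx
      simp [eval0, Finsupp.single_apply] at this
      exact hk this
  -- the diagonal
  intro n
  by_cases hn : n = 0
  · subst hn
    have he : (Finsupp.single (0 : Fin 2) 0 + Finsupp.single 1 0) = (0 : Fin 2 →₀ ℕ) := by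
      simp
    rw [he, key, map_add, MvPowerSeries.coeff_X, MvPowerSeries.coeff_mul]
    have h1 : ((0 : Fin 2 →₀ ℕ) = Finsupp.single 1 1) = False := by
      simp [eq_comm, Finsupp.single_eq_zero]
    rw [if_neg (by simp [Finsupp.single_eq_zero, eq_comm]), zero_add]
    have hsum : ∑ p ∈ Finset.HasAntidiagonal.antidiagonal (0 : Fin 2 →₀ ℕ),
        MvPowerSeries.coeff p.1 g * MvPowerSeries.coeff p.2 h = 0 := by
      apply Finset.sum_eq_zero
      intro p hp
      rw [Finset.HasAntidiagonal.mem_antidiagonal] at hp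
      have h20 : p.2 0 = 0 := by
        have := congrArg (fun v : Fin 2 →₀ ℕ => v 0) hp
        simp at this
        omega
      have h21 : p.2 1 = 0 := by
        have := congrArg (fun v : Fin 2 →₀ ℕ => v 1) hp
        simp at this
        omega
      rw [hcoeffh, if_neg (by omega), mul_zero]
    rw [hsum]
    rw [PowerSeries.coeff_zero_eq_constantCoeff, hf0]
  · -- n ≥ 1
    have hn1 : 1 ≤ n := Nat.one_le_iff_ne_zero.mpr hn
    rw [key, map_add, MvPowerSeries.coeff_X, MvPowerSeries.coeff_mul]
    have hne : (Finsupp.single (0 : Fin 2) n + Finsupp.single 1 n) ≠ Finsupp.single 1 1 := by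
      intro hx
      have := congrArg (fun v : Fin 2 →₀ ℕ => v 0) hx
      simp [eval0, Finsupp.single_apply] at this
      exact hn this
    rw [if_neg hne, zero_add]
    set p₀ : (Fin 2 →₀ ℕ) × (Fin 2 →₀ ℕ) :=
      (Finsupp.single 1 1, Finsupp.single 0 n + Finsupp.single 1 (n - 1)) with hp₀
    have hmem : p₀ ∈ Finset.HasAntidiagonal.antidiagonal
        (Finsupp.single (0 : Fin 2) n + Finsupp.single 1 n) := by
      rw [Finset.HasAntidiagonal.mem_antidiagonal]
      ext a
      fin_cases a <;> simp [hp₀, Finsupp.single_apply] <;> omega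
    rw [Finset.sum_eq_single p₀]
    · -- value at p₀
      have hc1 : MvPowerSeries.coeff p₀.1 g = 1 := by
        have := offdiag 0
        simpa [Finsupp.single_zero] using this
      have hc2 : MvPowerSeries.coeff p₀.2 h = PowerSeries.coeff n f := by
        rw [hcoeffh, eval0, eval1, if_pos (by omega)]
      rw [hc1, hc2, one_mul]
    · -- other terms vanish
      intro p hp hpne
      rw [Finset.HasAntidiagonal.mem_antidiagonal] at hp
      by_cases hc : p.2 0 = p.2 1 + 1
      · have hp0 : p.1 0 + p.2 0 = n := by
          have := congrArg (fun v : Fin 2 →₀ ℕ => v 0) hp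
          simpa [eval0] using this
        have hp1 : p.1 1 + p.2 1 = n := by
          have := congrArg (fun v : Fin 2 →₀ ℕ => v 1) hp
          simpa [eval1] using this
        have h11 : p.1 1 = p.1 0 + 1 := by omega
        have hval : MvPowerSeries.coeff p.1 g = if p.1 0 = 0 then 1 else 0 := by
          have h2 := offdiag (p.1 0)
          rw [← h11, ← fin2_eval p.1] at h2
          exact h2
        by_cases hz : p.1 0 = 0
        · exfalso
          apply hpne
          have he1 : p.1 = Finsupp.single 1 1 := by
            ext a
            fin_cases a <;> simp [Finsupp.single_apply] <;> omega
          have he2 : p.2 = Finsupp.single 0 n + Finsupp.single 1 (n - 1) := by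
            ext a
            fin_cases a <;> simp [Finsupp.single_apply] <;> omega
          exact Prod.ext he1 he2
        · rw [hval, if_neg hz, zero_mul]
      · rw [hcoeffh, if_neg hc, mul_zero]
    · intro habs
      exact absurd hmem habs
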